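/- Suppose ∑_{b∈L} r_b < t_max. For every feasible assignment {t_b}_{b∈L} with ∑_{b∈L} t_b = t_max that is not a solution of problem (B), there exists a finite sequence of feasible assignments starting at {t_b} and ending at a solution of (B), such that each assignment in the sequence is obtained from the previous one by increasing one coordinate by 1 and decreasing another coordinate by 1, and the objective value ∑_{b∈L} E(r_b,t_b) is strictly increasing along the sequence. -/
import Mathlib


/-- `betaP p t r = ∑_{i=0}^{r-1} C(t,i) (1-p)^i p^(t-i)`. -/
noncomputable def betaP (p : ℝ) (t r : ℕ) : ℝ :=
  ∑ i ∈ Finset.range r, (t.choose i : ℝ) * (1 - p) ^ i * p ^ (t - i)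

/-- Expected rank function `E(r,t) = ∑_{i=0}^{t} C(t,i) (1-p)^i p^(t-i) * min{i,r}`. -/
noncomputable def expRank (p : ℝ) (r t : ℕ) : ℝ :=
  ∑ i ∈ Finset.range (t + 1),
    (t.choose i : ℝ) * (1 - p) ^ i * p ^ (t - i) * ((min i r : ℕ) : ℝ)

lemma term_nonneg {p : ℝ} (hp0 : 0 ≤ p) (hp1 : p ≤ 1) (t i c : ℕ) :
    0 ≤ (c : ℝ) * (1 - p) ^ i * p ^ (t - i) :=
  mul_nonneg (mul_nonneg (Nat.cast_nonneg _) (pow_nonneg (by linarith) _)) (pow_nonneg hp0 _)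

lemma betaP_nonneg {p : ℝ} (hp0 : 0 ≤ p) (hp1 : p ≤ 1) (t r : ℕ) : 0 ≤ betaP p t r :=
  Finset.sum_nonneg fun i _ => term_nonneg hp0 hp1 t i _

lemma betaP_mono_r {p : ℝ} (hp0 : 0 ≤ p) (hp1 : p ≤ 1) (t : ℕ) {r r' : ℕ} (h : r ≤ r') :
    betaP p t r ≤ betaP p t r' :=
  Finset.sum_le_sum_of_subset_of_nonneg (Finset.range_subset_range.2 h)
    fun i _ _ => term_nonneg hp0 hp1 t i _

lemma betaP_eq_ite (p : ℝ) (t r : ℕ) :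
    betaP p t r = ∑ i ∈ Finset.range (t + 1),
      (if i < r then (t.choose i : ℝ) * (1 - p) ^ i * p ^ (t - i) else 0) := by
  rw [Finset.sum_ite, Finset.sum_const_zero, add_zero, betaP]
  rcases le_or_gt r (t + 1) with h | h
  · refine Finset.sum_congr ?_ fun _ _ => rfl
    ext i
    simp only [Finset.mem_filter, Finset.mem_range]
    omega
  · refine (Finset.sum_subset ?_ ?_).symm
    · intro i hi
      simp only [Finset.mem_filter, Finset.mem_range] at hi ⊢
      omega
    · intro i hi hni
      simp only [Finset.mem_filter, Finset.mem_range] at hi hni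
      have hc : t.choose i = 0 := Nat.choose_eq_zero_of_lt (by omega)
      simp [hc]

lemma expRank_succ (p : ℝ) (r t : ℕ) :
    expRank p r (t + 1) = expRank p r t + (1 - p) * betaP p t r := by
  have key : ∀ i : ℕ, ((min (i+1) r : ℕ) : ℝ) = ((min i r : ℕ) : ℝ) + (if i < r then (1:ℝ) else 0) := by
    intro i
    split
    · have : min (i+1) r = min i r + 1 := by omega
      rw [this]; push_cast; ring
    · have : min (i+1) r = min i r := by omega
      rw [this]; simp
  rw [expRank, Finset.sum_range_succ']
  simp only [Nat.choose_succ_succ, Nat.cast_add]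
  rw [show ((t+1).choose 0 : ℝ) * (1-p)^0 * p^(t+1-0) * ((min 0 r : ℕ):ℝ) = 0 by simp]
  rw [add_zero]
  have split1 : ∀ i : ℕ, ((t.choose i : ℝ) + (t.choose (i+1) : ℝ)) * (1-p)^(i+1) * p^(t+1-(i+1)) * ((min (i+1) r : ℕ):ℝ)
      = (1-p) * ((t.choose i : ℝ) * (1-p)^i * p^(t-i) * ((min i r : ℕ):ℝ))
        + (1-p) * (if i < r then (t.choose i : ℝ) * (1-p)^i * p^(t-i) else 0)
        + p * ((t.choose (i+1) : ℝ) * (1-p)^(i+1) * p^(t-(i+1)) * ((min (i+1) r : ℕ):ℝ)) := by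
    intro i
    have h1 : t + 1 - (i+1) = t - i := by omega
    rw [h1, key i]
    rcases lt_or_ge i t with h | h
    · have h2 : t - i = (t - (i+1)) + 1 := by omega
      rw [h2, pow_succ]
      split <;> ring
    · have hc : t.choose (i+1) = 0 := Nat.choose_eq_zero_of_lt (by omega)
      have h4 : t - i = 0 := by omega
      rw [hc, h4]
      split <;> · simp; ring
  rw [Finset.sum_congr rfl (fun i _ => split1 i)]
  rw [Finset.sum_add_distrib, Finset.sum_add_distrib, ← Finset.mul_sum, ← Finset.mul_sum, ← Finset.mul_sum]
  rw [← betaP_eq_ite]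
  have e1 : ∑ i ∈ Finset.range (t+1), (t.choose (i+1) : ℝ) * (1-p)^(i+1) * p^(t-(i+1)) * ((min (i+1) r : ℕ):ℝ)
      = ∑ i ∈ Finset.range t, (t.choose (i+1) : ℝ) * (1-p)^(i+1) * p^(t-(i+1)) * ((min (i+1) r : ℕ):ℝ) := by
    rw [Finset.sum_range_succ]
    simp [Nat.choose_eq_zero_of_lt (Nat.lt_succ_self t)]
  have e2 : expRank p r t
      = ∑ i ∈ Finset.range t, (t.choose (i+1) : ℝ) * (1-p)^(i+1) * p^(t-(i+1)) * ((min (i+1) r : ℕ):ℝ) := by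
    rw [expRank, Finset.sum_range_succ']
    simp
  rw [e1, ← e2, expRank]
  ring

lemma betaP_succ (p : ℝ) (t r : ℕ) :
    betaP p (t+1) (r+1) = (1 - p) * betaP p t r + p * betaP p t (r+1) := by
  rw [betaP, Finset.sum_range_succ']
  simp only [Nat.choose_succ_succ, Nat.cast_add]
  have split1 : ∀ i : ℕ, ((t.choose i : ℝ) + (t.choose (i+1) : ℝ)) * (1-p)^(i+1) * p^(t+1-(i+1))
      = (1-p) * ((t.choose i : ℝ) * (1-p)^i * p^(t-i))
        + p * ((t.choose (i+1) : ℝ) * (1-p)^(i+1) * p^(t-(i+1))) := by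
    intro i
    have h1 : t + 1 - (i+1) = t - i := by omega
    rw [h1]
    rcases lt_or_ge i t with h | h
    · have h2 : t - i = (t - (i+1)) + 1 := by omega
      rw [h2, pow_succ]; ring
    · have hc : t.choose (i+1) = 0 := Nat.choose_eq_zero_of_lt (by omega)
      have h4 : t - i = 0 := by omega
      rw [hc, h4]; simp; ring
  rw [Finset.sum_congr rfl (fun i _ => split1 i), Finset.sum_add_distrib,
    ← Finset.mul_sum, ← Finset.mul_sum, ← betaP]
  have e2 : betaP p t (r+1) = (∑ i ∈ Finset.range r, (t.choose (i+1) : ℝ) * (1-p)^(i+1) * p^(t-(i+1)))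
      + (t.choose 0 : ℝ) * (1-p)^0 * p^(t-0) := by
    rw [betaP, Finset.sum_range_succ']
  have e3 : ((t+1).choose 0 : ℝ) * (1-p)^0 * p^(t+1-0) = p * ((t.choose 0 : ℝ) * (1-p)^0 * p^(t-0)) := by
    simp [pow_succ]; ring
  rw [e3, e2]
  ring

lemma betaP_anti_succ {p : ℝ} (hp0 : 0 ≤ p) (hp1 : p ≤ 1) (t r : ℕ) :
    betaP p (t+1) r ≤ betaP p t r := by
  cases r with
  | zero => simp [betaP]
  | succ m =>
    rw [betaP_succ]
    have h1 : betaP p t m ≤ betaP p t (m+1) := betaP_mono_r hp0 hp1 t (Nat.le_succ m)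
    nlinarith

lemma betaP_anti {p : ℝ} (hp0 : 0 ≤ p) (hp1 : p ≤ 1) (r : ℕ) {t t' : ℕ} (h : t ≤ t') :
    betaP p t' r ≤ betaP p t r := by
  induction t', h using Nat.le_induction with
  | base => exact le_refl _
  | succ n hn ih => exact le_trans (betaP_anti_succ hp0 hp1 n r) ih

lemma expRank_upper {p : ℝ} (hp0 : 0 ≤ p) (hp1 : p ≤ 1) (r t : ℕ) (k : ℕ) :
    expRank p r (t + k) ≤ expRank p r t + k * ((1 - p) * betaP p t r) := by
  induction k with
  | zero => simp
  | succ k ih =>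
    have h1 : betaP p (t + k) r ≤ betaP p t r := betaP_anti hp0 hp1 r (Nat.le_add_right t k)
    have h2 := expRank_succ p r (t + k)
    have hq : (0:ℝ) ≤ 1 - p := by linarith
    push_cast
    have : (t + (k+1)) = (t + k) + 1 := by omega
    rw [this, h2]
    nlinarith

lemma expRank_lower {p : ℝ} (hp0 : 0 ≤ p) (hp1 : p ≤ 1) (r t : ℕ) (k : ℕ) :
    expRank p r t + (k + 1 : ℝ) * ((1 - p) * betaP p (t + k) r) ≤ expRank p r (t + k + 1) := by
  induction k with
  | zero => simp [expRank_succ]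
  | succ k ih =>
    have h1 : betaP p (t + k + 1) r ≤ betaP p (t + k) r := betaP_anti hp0 hp1 r (by omega)
    have h2 := expRank_succ p r (t + k + 1)
    have hq : (0:ℝ) ≤ 1 - p := by linarith
    have hb := betaP_nonneg hp0 hp1 (t + k + 1) r
    have : t + (k+1) = t + k + 1 := by omega
    rw [this, h2]
    push_cast
    nlinarith [mul_le_mul_of_nonneg_left h1 (by positivity : (0:ℝ) ≤ ((k:ℝ)+1)*(1-p))]

lemma local_global {ι : Type*} {p : ℝ} (hp0 : 0 < p) (hp1 : p < 1)
    (L : Finset ι) (r : ι → ℕ) (s : ι → ℕ)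
    (h : ∀ a ∈ L, ∀ b ∈ L, a ≠ b → 1 ≤ s b →
      (1 - p) * betaP p (s a) (r a) ≤ (1 - p) * betaP p (s b - 1) (r b)) :
    ∀ s' : ι → ℕ, (∑ b ∈ L, s' b) = (∑ b ∈ L, s b) →
      ∑ b ∈ L, expRank p (r b) (s' b) ≤ ∑ b ∈ L, expRank p (r b) (s b) := by
  intro s' hsum
  by_cases hDn : ∃ b0 ∈ L, s' b0 < s b0
  · obtain ⟨b0, hb0L, hb0, hmin⟩ :
        ∃ b0 ∈ L, s' b0 < s b0 ∧ ∀ b ∈ L, s' b < s b →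
          (1 - p) * betaP p (s b0 - 1) (r b0) ≤ (1 - p) * betaP p (s b - 1) (r b) := by
      obtain ⟨b0, hb0, hmin⟩ := Finset.exists_min_image (L.filter (fun b => s' b < s b))
        (fun b => (1 - p) * betaP p (s b - 1) (r b))
        (by obtain ⟨b, hb, hb'⟩ := hDn; exact ⟨b, Finset.mem_filter.2 ⟨hb, hb'⟩⟩)
      simp only [Finset.mem_filter] at hb0 hmin
      exact ⟨b0, hb0.1, hb0.2, fun b hb hb' => hmin b ⟨hb, hb'⟩⟩
    set β := (1 - p) * betaP p (s b0 - 1) (r b0) with hβ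
    have key : ∀ x ∈ L, expRank p (r x) (s' x) - expRank p (r x) (s x)
        ≤ ((s' x : ℝ) - (s x : ℝ)) * β := by
      intro x hx
      rcases le_or_gt (s x) (s' x) with hle | hlt
      · have hne : x ≠ b0 := by rintro rfl; omega
        have hD : (1 - p) * betaP p (s x) (r x) ≤ β :=
          h x hx b0 hb0L hne (by omega)
        obtain ⟨k, hk⟩ : ∃ k, s' x = s x + k := ⟨s' x - s x, by omega⟩
        have hub := expRank_upper hp0.le hp1.le (r x) (s x) k
        rw [hk]
        push_cast
        have hk0 : (0:ℝ) ≤ (k : ℝ) := Nat.cast_nonneg k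
        nlinarith [mul_le_mul_of_nonneg_left hD hk0]
      · obtain ⟨k, hk⟩ : ∃ k, s x = s' x + k + 1 := ⟨s x - s' x - 1, by omega⟩
        have hlb := expRank_lower hp0.le hp1.le (r x) (s' x) k
        have hge : β ≤ (1 - p) * betaP p (s x - 1) (r x) := hmin x hx hlt
        have hsx1 : s x - 1 = s' x + k := by omega
        rw [hsx1] at hge
        rw [hk]
        push_cast
        have hk1 : (0:ℝ) ≤ (k : ℝ) + 1 := by positivity
        nlinarith [mul_le_mul_of_nonneg_left hge hk1]
    have hsumle : ∑ x ∈ L, (expRank p (r x) (s' x) - expRank p (r x) (s x))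
        ≤ ∑ x ∈ L, ((s' x : ℝ) - (s x : ℝ)) * β := Finset.sum_le_sum key
    have hzero : ∑ x ∈ L, ((s' x : ℝ) - (s x : ℝ)) * β = 0 := by
      rw [← Finset.sum_mul, Finset.sum_sub_distrib]
      have : (∑ x ∈ L, (s' x : ℝ)) = (∑ x ∈ L, (s x : ℝ)) := by
        push_cast [← Nat.cast_sum]
        exact_mod_cast congrArg (Nat.cast : ℕ → ℝ) hsum
      rw [this, sub_self, zero_mul]
    rw [Finset.sum_sub_distrib] at hsumle
    linarith [hzero ▸ hsumle]
  · push_neg at hDn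
    have heq : ∀ b ∈ L, s b = s' b := by
      intro b hb
      by_contra hne
      have h1 : s b < s' b := by have := hDn b hb; omega
      have h2 : ∑ b ∈ L, s b < ∑ b ∈ L, s' b :=
        Finset.sum_lt_sum hDn ⟨b, hb, h1⟩
      omega
    exact le_of_eq (Finset.sum_congr rfl fun b hb => by rw [heq b hb])

section Main

variable {ι : Type*} [DecidableEq ι] (p : ℝ) (L : Finset ι) (r : ι → ℕ)

/-- The swap assignment: one unit moved from `b` to `a`. -/
def swapFn (s : ι → ℕ) (a b : ι) : ι → ℕ :=
  Function.update (Function.update s a (s a + 1)) b (s b - 1)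

lemma swapFn_sum {s : ι → ℕ} {a b : ι} (haL : a ∈ L) (hbL : b ∈ L) (hab : a ≠ b)
    (hsb : 1 ≤ s b) : ∑ x ∈ L, swapFn s a b x = ∑ x ∈ L, s x := by
  unfold swapFn
  rw [Finset.sum_update_of_mem hbL]
  have haL' : a ∈ L \ {b} := Finset.mem_sdiff.2 ⟨haL, by simp [hab]⟩
  rw [Finset.sum_update_of_mem haL']
  rw [Finset.sum_eq_sum_sdiff_singleton_add hbL s,
      Finset.sum_eq_sum_sdiff_singleton_add haL' s]
  omega

lemma swapFn_obj {s : ι → ℕ} {a b : ι} (haL : a ∈ L) (hbL : b ∈ L) (hab : a ≠ b)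
    (hsb : 1 ≤ s b) :
    ∑ x ∈ L, expRank p (r x) (swapFn s a b x)
      = ∑ x ∈ L, expRank p (r x) (s x)
        + ((1 - p) * betaP p (s a) (r a) - (1 - p) * betaP p (s b - 1) (r b)) := by
  have hterm : ∀ x ∈ L, expRank p (r x) (swapFn s a b x)
      = expRank p (r x) (s x)
        + ((if x = a then (1 - p) * betaP p (s a) (r a) else 0)
           - (if x = b then (1 - p) * betaP p (s b - 1) (r b) else 0)) := by
    intro x hx
    unfold swapFn
    by_cases hxa : x = a
    · subst hxa
      rw [Function.update_of_ne hab, Function.update_self]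
      rw [expRank_succ, if_pos rfl, if_neg hab]
      ring
    · by_cases hxb : x = b
      · subst hxb
        rw [Function.update_self, if_neg hxa, if_pos rfl]
        have : s x = (s x - 1) + 1 := by omega
        rw [this, expRank_succ]
        have h2 : s x - 1 + 1 - 1 = s x - 1 := by omega
        rw [h2]
        ring
      · rw [Function.update_of_ne hxb, Function.update_of_ne hxa,
          if_neg hxa, if_neg hxb]
        ring
  rw [Finset.sum_congr rfl hterm, Finset.sum_add_distrib, Finset.sum_sub_distrib]
  rw [Finset.sum_ite_eq' L a, Finset.sum_ite_eq' L b, if_pos haL, if_pos hbL]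

lemma reach {p : ℝ} (hp0 : 0 < p) (hp1 : p < 1) (L : Finset ι) (r : ι → ℕ) (tmax : ℕ)
    (V : Finset ℝ)
    (hV : ∀ s : ι → ℕ, (∑ b ∈ L, s b) = tmax → (∑ b ∈ L, expRank p (r b) (s b)) ∈ V) :
    ∀ N : ℕ, ∀ s : ι → ℕ, (∑ b ∈ L, s b) = tmax →
      (V.filter (fun v => (∑ b ∈ L, expRank p (r b) (s b)) < v)).card ≤ N →
    ∃ n : ℕ, ∃ c : ℕ → ι → ℕ,
      c 0 = s ∧
      (∀ i ≤ n, (∑ b ∈ L, c i b) = tmax) ∧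
      (∀ i < n, ∃ a ∈ L, ∃ b ∈ L, a ≠ b ∧
        c (i + 1) a = c i a + 1 ∧ c i b = c (i + 1) b + 1 ∧
        (∀ x, x ≠ a → x ≠ b → c (i + 1) x = c i x)) ∧
      (∀ i < n, ∑ b ∈ L, expRank p (r b) (c i b) <
        ∑ b ∈ L, expRank p (r b) (c (i + 1) b)) ∧
      (∀ t' : ι → ℕ, (∑ b ∈ L, t' b) = tmax →
        ∑ b ∈ L, expRank p (r b) (t' b) ≤ ∑ b ∈ L, expRank p (r b) (c n b)) := by
  intro N
  induction N with
  | zero =>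
    intro s hfeas hcard
    by_cases hopt : ∀ t' : ι → ℕ, (∑ b ∈ L, t' b) = tmax →
        ∑ b ∈ L, expRank p (r b) (t' b) ≤ ∑ b ∈ L, expRank p (r b) (s b)
    · exact ⟨0, fun _ => s, rfl, fun i _ => hfeas, fun i hi => absurd hi (by omega),
        fun i hi => absurd hi (by omega), hopt⟩
    · exfalso
      push_neg at hopt
      obtain ⟨t', hfeas', hgt⟩ := hopt
      have hmem : (∑ b ∈ L, expRank p (r b) (t' b)) ∈
          V.filter (fun v => (∑ b ∈ L, expRank p (r b) (s b)) < v) :=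
        Finset.mem_filter.2 ⟨hV t' hfeas', hgt⟩
      have := Finset.card_pos.2 ⟨_, hmem⟩
      omega
  | succ N ih =>
    intro s hfeas hcard
    by_cases hopt : ∀ t' : ι → ℕ, (∑ b ∈ L, t' b) = tmax →
        ∑ b ∈ L, expRank p (r b) (t' b) ≤ ∑ b ∈ L, expRank p (r b) (s b)
    · exact ⟨0, fun _ => s, rfl, fun i _ => hfeas, fun i hi => absurd hi (by omega),
        fun i hi => absurd hi (by omega), hopt⟩
    · -- there is a strictly improving swap
      have hswap : ∃ a ∈ L, ∃ b ∈ L, a ≠ b ∧ 1 ≤ s b ∧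
          (1 - p) * betaP p (s b - 1) (r b) < (1 - p) * betaP p (s a) (r a) := by
        by_contra hno
        push_neg at hno
        apply hopt
        intro t' ht'
        apply local_global hp0 hp1 L r s _ t' (by rw [ht', hfeas])
        intro a ha b hb hab hsb
        exact hno a ha b hb hab hsb
      obtain ⟨a, haL, b, hbL, hab, hsb, himp⟩ := hswap
      set s'' := swapFn s a b with hs''
      have hfeas'' : (∑ x ∈ L, s'' x) = tmax := by
        rw [hs'', swapFn_sum L haL hbL hab hsb, hfeas]
      have hobj : ∑ x ∈ L, expRank p (r x) (s x) < ∑ x ∈ L, expRank p (r x) (s'' x) := by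
        rw [hs'', swapFn_obj p L r haL hbL hab hsb]
        linarith
      have hcard'' : (V.filter (fun v => (∑ x ∈ L, expRank p (r x) (s'' x)) < v)).card ≤ N := by
        have hss : V.filter (fun v => (∑ x ∈ L, expRank p (r x) (s'' x)) < v)
            ⊂ V.filter (fun v => (∑ x ∈ L, expRank p (r x) (s x)) < v) := by
          refine Finset.ssubset_iff_of_subset ?_ |>.2 ?_
          · intro v hv
            simp only [Finset.mem_filter] at hv ⊢
            exact ⟨hv.1, lt_trans hobj hv.2⟩
          · exact ⟨_, Finset.mem_filter.2 ⟨hV s'' hfeas'', hobj⟩,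
              by simp only [Finset.mem_filter, not_and, not_lt]; intro _; exact le_refl _⟩
        have := Finset.card_lt_card hss
        omega
      obtain ⟨n, c, hc0, hsums, hsteps, hincr, hopt'⟩ := ih s'' hfeas'' hcard''
      refine ⟨n + 1, fun i => if i = 0 then s else c (i - 1), by simp, ?_, ?_, ?_, ?_⟩
      · intro i hi
        by_cases h0 : i = 0
        · simp [h0, hfeas]
        · simp only [h0, if_neg]
          exact hsums (i - 1) (by omega)
      · intro i hi
        by_cases h0 : i = 0
        · subst h0
          refine ⟨a, haL, b, hbL, hab, ?_, ?_, ?_⟩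
          · simp only [if_pos rfl, if_neg (by omega : (1:ℕ) ≠ 0), if_true, ite_true]
            rw [show (1:ℕ) - 1 = 0 from rfl, hc0, hs'']
            unfold swapFn
            rw [Function.update_of_ne hab, Function.update_self]
          · simp only [if_pos rfl, if_neg (by omega : (1:ℕ) ≠ 0), if_true, ite_true]
            rw [show (1:ℕ) - 1 = 0 from rfl, hc0, hs'']
            unfold swapFn
            rw [Function.update_self]
            omega
          · intro x hxa hxb
            simp only [if_pos rfl, if_neg (by omega : (1:ℕ) ≠ 0), if_true, ite_true]
            rw [show (1:ℕ) - 1 = 0 from rfl, hc0, hs'']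
            unfold swapFn
            rw [Function.update_of_ne hxb, Function.update_of_ne hxa]
        · obtain ⟨j, rfl⟩ : ∃ j, i = j + 1 := ⟨i - 1, by omega⟩
          simp only [if_neg (by omega : j + 1 ≠ 0), if_neg (by omega : j + 2 ≠ 0)]
          have : j + 1 - 1 = j := by omega
          have h2 : j + 1 + 1 - 1 = j + 1 := by omega
          rw [this, h2]
          exact hsteps j (by omega)
      · intro i hi
        by_cases h0 : i = 0
        · subst h0
          simp only [if_pos rfl, if_neg (by omega : (1:ℕ) ≠ 0), if_true, ite_true]
          rw [show (1:ℕ) - 1 = 0 from rfl, hc0]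
          exact hobj
        · obtain ⟨j, rfl⟩ : ∃ j, i = j + 1 := ⟨i - 1, by omega⟩
          simp only [if_neg (by omega : j + 1 ≠ 0), if_neg (by omega : j + 2 ≠ 0)]
          have : j + 1 - 1 = j := by omega
          have h2 : j + 1 + 1 - 1 = j + 1 := by omega
          rw [this, h2]
          exact hincr j (by omega)
      · simp only [if_neg (by omega : n + 1 ≠ 0)]
        have : n + 1 - 1 = n := by omega
        rw [this]
        exact hopt'

end Main

theorem stmt16 {ι : Type*} (p : ℝ) (hp0 : 0 < p) (hp1 : p < 1)
    (L : Finset ι) (r : ι → ℕ) (tmax : ℕ)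
    (hlt : (∑ b ∈ L, r b) < tmax)
    (t : ι → ℕ) (hfeas : (∑ b ∈ L, t b) = tmax)
    (hnotopt : ¬ ∀ t' : ι → ℕ, (∑ b ∈ L, t' b) = tmax →
      ∑ b ∈ L, expRank p (r b) (t' b) ≤ ∑ b ∈ L, expRank p (r b) (t b)) :
    ∃ n : ℕ, ∃ c : ℕ → ι → ℕ,
      c 0 = t ∧
      (∀ i ≤ n, (∑ b ∈ L, c i b) = tmax) ∧
      (∀ i < n, ∃ a ∈ L, ∃ b ∈ L, a ≠ b ∧
        c (i + 1) a = c i a + 1 ∧ c i b = c (i + 1) b + 1 ∧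
        (∀ x, x ≠ a → x ≠ b → c (i + 1) x = c i x)) ∧
      (∀ i < n, ∑ b ∈ L, expRank p (r b) (c i b) <
        ∑ b ∈ L, expRank p (r b) (c (i + 1) b)) ∧
      (∀ t' : ι → ℕ, (∑ b ∈ L, t' b) = tmax →
        ∑ b ∈ L, expRank p (r b) (t' b) ≤ ∑ b ∈ L, expRank p (r b) (c n b)) := by
  classical
  set V : Finset ℝ := (L.pi fun _ => Finset.range (tmax + 1)).image
    (fun g => ∑ b ∈ L.attach, expRank p (r b.1) (g b.1 b.2)) with hV
  have hVmem : ∀ s : ι → ℕ, (∑ b ∈ L, s b) = tmax →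
      (∑ b ∈ L, expRank p (r b) (s b)) ∈ V := by
    intro s hs
    rw [hV]
    apply Finset.mem_image.2
    refine ⟨fun a _ => s a, ?_, ?_⟩
    · rw [Finset.mem_pi]
      intro a ha
      rw [Finset.mem_range]
      have : s a ≤ ∑ b ∈ L, s b := Finset.single_le_sum (fun _ _ => Nat.zero_le _) ha
      omega
    · rw [← Finset.sum_attach L (fun b => expRank p (r b) (s b))]
  exact reach hp0 hp1 L r tmax V hVmem _ t hfeas (le_refl _)
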